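/- For n ≥ 3, the inverse of the circulant matrix Q = circ(Q₁, ..., Qₙ) over ℚ is the circulant matrix circ(q₁, ..., qₙ) where q₁ = (1/uₙ)(1 - 8(Qₙ-2)^{n-3}/(Q₁-Qₙ₊₁)^{n-2} + Σ_{k=1}^{n-3} (Q_{n-k+2} - 3Q_{n-k+1})(Qₙ-2)^{k-1}/(Q₁-Qₙ₊₁)^k), q₂ = (1/uₙ)(-3 + Σ_{k=1}^{n-2} (Q_{n-k+1} - 3Q_{n-k})(Qₙ-2)^{k-1}/(Q₁-Qₙ₊₁)^k), and q_m = 4(Qₙ-2)^{m-3}/(uₙ (Q₁-Qₙ₊₁)^{m-2}) for 3 ≤ m ≤ n, where uₙ = Q₁ - 3Qₙ + Σ_{k=2}^{n-1} (Q_{k+1} - 3Qₖ)((Qₙ-2)/(Q₁-Qₙ₊₁))^{n-k}. -/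

import Mathlib

def pell : ℕ → ℚ
  | 0 => 0
  | 1 => 1
  | n + 2 => 2 * pell (n + 1) + pell n

def pellLucas : ℕ → ℚ
  | 0 => 2
  | 1 => 2
  | n + 2 => 2 * pellLucas (n + 1) + pellLucas n

/-- Circulant matrix `circ (c₁, …, cₙ)` with `(i,j)` entry `c ((j - i mod n) + 1)`. -/
def circMat (n : ℕ) (c : ℕ → ℚ) : Matrix (Fin n) (Fin n) ℚ :=
  fun i j => c ((j - i : Fin n).val + 1)

open Finset

lemma pl_rec (k : ℕ) : pellLucas (k+2) = 2 * pellLucas (k+1) + pellLucas k := rfl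

lemma pl_ge_two : ∀ k, 2 ≤ pellLucas k
  | 0 => le_refl _
  | 1 => le_refl _
  | (k+2) => by
    have h1 := pl_ge_two (k+1); have h2 := pl_ge_two k
    rw [pl_rec]; linarith

lemma quad_ne (x : ℚ) : 1 + 2*x - x^2 ≠ 0 := by
  intro h
  have h2 : ((x - 1 : ℚ) : ℝ)^2 = 2 := by
    have : (x-1)^2 = 2 := by linear_combination -h
    exact_mod_cast congrArg (fun q : ℚ => (q : ℝ)) this
  have hs : Real.sqrt 2 = |((x - 1 : ℚ) : ℝ)| := by
    rw [← h2, Real.sqrt_sq_eq_abs]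
  have : Irrational (Real.sqrt 2) := irrational_sqrt_two
  rw [hs] at this
  exact this ⟨|x - 1|, by push_cast [abs_eq_abs]; left; rfl⟩

lemma revL (x : ℚ) (c L : ℕ) :
    (1 + 2*x - x^2) * ∑ i ∈ range L, pellLucas (c+1+i) * x^(L-1-i)
    = -pellLucas (c+1) * x^(L+1) + (2*pellLucas (c+1) - pellLucas (c+2)) * x^L
      + pellLucas (c+L+1) * x + pellLucas (c+L) := by
  induction L with
  | zero => simp; linear_combination pl_rec c
  | succ L ih =>
    rw [sum_range_succ]
    have hsplit : ∀ i ∈ range L, pellLucas (c+1+i) * x^(L+1-1-i)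
        = x * (pellLucas (c+1+i) * x^(L-1-i)) := by
      intro i hi
      rw [mem_range] at hi
      have : L+1-1-i = (L-1-i)+1 := by omega
      rw [this, pow_succ]; ring
    rw [sum_congr rfl hsplit, ← mul_sum]
    have : L+1-1-L = 0 := by omega
    rw [this]
    have hr := pl_rec (c+L)
    simp only [show c+(L+1)+1 = c+L+2 from by ring, show c+(L+1) = c+L+1 from by ring,
      show c+1+L = c+L+1 from by ring, show c+L+1+1 = c+L+2 from by ring, pow_succ] at *
    linear_combination x * ih - x * hr

set_option maxHeartbeats 2000000 in
theorem circ_pellLucas_inverse (n : ℕ) (hn : 3 ≤ n)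
    (u : ℚ) (hu : u = pellLucas 1 - 3 * pellLucas n +
      ∑ k ∈ Finset.Icc 2 (n - 1), (pellLucas (k + 1) - 3 * pellLucas k) *
        ((pellLucas n - 2) / (pellLucas 1 - pellLucas (n + 1))) ^ (n - k))
    (q : ℕ → ℚ)
    (hq1 : q 1 = (1 / u) * (1 -
      8 * (pellLucas n - 2) ^ (n - 3) / (pellLucas 1 - pellLucas (n + 1)) ^ (n - 2) +
      ∑ k ∈ Finset.Icc 1 (n - 3), (pellLucas (n - k + 2) - 3 * pellLucas (n - k + 1)) *
        (pellLucas n - 2) ^ (k - 1) / (pellLucas 1 - pellLucas (n + 1)) ^ k))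
    (hq2 : q 2 = (1 / u) * (-3 +
      ∑ k ∈ Finset.Icc 1 (n - 2), (pellLucas (n - k + 1) - 3 * pellLucas (n - k)) *
        (pellLucas n - 2) ^ (k - 1) / (pellLucas 1 - pellLucas (n + 1)) ^ k))
    (hqm : ∀ m, 3 ≤ m → m ≤ n →
      q m = 4 * (pellLucas n - 2) ^ (m - 3) /
        (u * (pellLucas 1 - pellLucas (n + 1)) ^ (m - 2))) :
    (circMat n pellLucas)⁻¹ = circMat n q := by
  obtain ⟨M, rfl⟩ : ∃ M, n = M + 3 := ⟨n - 3, by omega⟩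
  clear hn
  have pl0 : pellLucas 0 = 2 := rfl
  have pl1 : pellLucas 1 = 2 := rfl
  have pl2 : pellLucas 2 = 6 := by rw [pl_rec 0, pl0, pl1]; norm_num
  have pl3 : pellLucas 3 = 14 := by rw [pl_rec 1, pl1, pl2]; norm_num
  have pl4 : pellLucas 4 = 34 := by rw [pl_rec 2, pl2, pl3]; norm_num
  have pl5 : pellLucas 5 = 82 := by rw [pl_rec 3, pl3, pl4]; norm_num
  have pl6 : pellLucas 6 = 198 := by rw [pl_rec 4, pl4, pl5]; norm_num
  simp only [show M+3-1 = M+2 from rfl, show M+3-2 = M+1 from rfl,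
    show M+3-3 = M from rfl, show M+3+1 = M+4 from rfl, pl1] at hu hq1 hq2 hqm
  obtain ⟨s, hs_def⟩ : ∃ x : ℚ, x = 2 - pellLucas (M+4) := ⟨_, rfl⟩
  obtain ⟨r, hr_def⟩ : ∃ x : ℚ, x = pellLucas (M+3) - 2 := ⟨_, rfl⟩
  rw [← hs_def, ← hr_def] at hu hq1 hq2 hqm
  obtain ⟨t, ht_def⟩ : ∃ x : ℚ, x = r / s := ⟨_, rfl⟩
  rw [← ht_def] at hu
  -- recurrences
  have hc3 : pellLucas (M+3) = 2*pellLucas (M+2) + pellLucas (M+1) := pl_rec (M+1)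
  have hc4 : pellLucas (M+4) = 2*pellLucas (M+3) + pellLucas (M+2) := pl_rec (M+2)
  have hc5 : pellLucas (M+5) = 2*pellLucas (M+4) + pellLucas (M+3) := pl_rec (M+3)
  have ha2 := pl_ge_two (M+1)
  have hb2 := pl_ge_two (M+2)
  have hc3ge : (6:ℚ) ≤ pellLucas (M+3) := by rw [hc3]; linarith
  have hc4ge : (14:ℚ) ≤ pellLucas (M+4) := by rw [hc4]; linarith
  have hrpos : 0 < r := by rw [hr_def]; linarith
  have hsneg : s < 0 := by rw [hs_def]; linarith
  have hsne : s ≠ 0 := ne_of_lt hsneg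
  have hrs : r + s < 0 := by rw [hr_def, hs_def, hc4]; linarith
  have htneg : t < 0 := by rw [ht_def]; exact div_neg_of_pos_of_neg hrpos hsneg
  have htgt : -1 < t := by rw [ht_def, lt_div_iff_of_neg hsneg]; linarith
  have habs : |t| < 1 := abs_lt.mpr ⟨htgt, by linarith⟩
  have hTabs : |t^(M+3)| < 1 := by
    rw [abs_pow]; exact pow_lt_one₀ (abs_nonneg _) habs (by omega)
  have hTne : t^(M+3) - 1 ≠ 0 := by
    intro h; rw [sub_eq_zero] at h; rw [h] at hTabs; norm_num at hTabs
  have hD : s * (t^(M+3) - 1) ≠ 0 := mul_ne_zero hsne hTne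
  have hquad : 1 + 2*t - t^2 ≠ 0 := quad_ne t
  have hst : s * t = r := by rw [ht_def]; field_simp
  -- the revL instances
  have hA2 := revL t 2 (M+2)
  have hA1 := revL t 1 (M+2)
  have hB2 := revL t 2 (M+1)
  have hB1 := revL t 1 (M+1)
  have hC4 := revL t 4 M
  have hC3 := revL t 3 M
  simp only [pl2, pl3, pl4, pl5, pl6,
    show (2:ℕ)+(M+2)+1 = M+5 from by omega, show (2:ℕ)+(M+2) = M+4 from by omega,
    show (1:ℕ)+(M+2)+1 = M+4 from by omega, show (1:ℕ)+(M+2) = M+3 from by omega,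
    show (2:ℕ)+(M+1)+1 = M+4 from by omega, show (2:ℕ)+(M+1) = M+3 from by omega,
    show (1:ℕ)+(M+1)+1 = M+3 from by omega, show (1:ℕ)+(M+1) = M+2 from by omega,
    show (4:ℕ)+M+1 = M+5 from by omega, show (4:ℕ)+M = M+4 from by omega,
    show (3:ℕ)+M+1 = M+4 from by omega, show (3:ℕ)+M = M+3 from by omega,
    show M+4+1 = M+5 from rfl, show M+3+1 = M+4 from rfl,
    show M+2+1 = M+3 from rfl, show M+1+1 = M+2 from rfl]
    at hA2 hA1 hB2 hB1 hC4 hC3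
  -- conversion of the Icc sum in hu
  have key_sum : (∑ k ∈ Icc 2 (M+2), (pellLucas (k+1) - 3*pellLucas k) * t^(M+3-k))
      = ((∑ i ∈ range (M+2), pellLucas (2+1+i) * t^(M+2-1-i)) - pellLucas (M+4))
        - 3*((∑ i ∈ range (M+2), pellLucas (1+1+i) * t^(M+2-1-i)) - pellLucas (M+3)) := by
    rw [← Finset.Ico_add_one_right_eq_Icc, Finset.sum_Ico_eq_sum_range]
    simp only [show M+2+1-2 = M+1 from rfl]
    rw [sum_range_succ (fun i => pellLucas (2+1+i) * t^(M+2-1-i)) (M+1),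
        sum_range_succ (fun i => pellLucas (1+1+i) * t^(M+2-1-i)) (M+1)]
    have h1 : ∀ i ∈ range (M+1), (pellLucas (2+i+1) - 3*pellLucas (2+i)) * t^(M+3-(2+i))
        = pellLucas (2+1+i) * t^(M+2-1-i) - 3*(pellLucas (1+1+i) * t^(M+2-1-i)) := by
      intro i hi; rw [mem_range] at hi
      rw [show 2+i+1 = 2+1+i from by omega, show (2:ℕ)+i = 1+1+i from by omega,
          show M+3-(2+i) = M+2-1-i from by omega]
      ring
    rw [sum_congr rfl h1, sum_sub_distrib, ← mul_sum]
    simp only [show 2+1+(M+1) = M+4 from by omega, show 1+1+(M+1) = M+3 from by omega,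
      show M+2-1-(M+1) = 0 from by omega, pow_zero, mul_one]
    ring
  have hu2 : u = 2 - 3*pellLucas (M+3) +
      (((∑ i ∈ range (M+2), pellLucas (2+1+i) * t^(M+2-1-i)) - pellLucas (M+4))
        - 3*((∑ i ∈ range (M+2), pellLucas (1+1+i) * t^(M+2-1-i)) - pellLucas (M+3))) := by
    rw [hu, key_sum]
  have SI0 : (2 - 3*pellLucas (M+3))*(1+2*t-t^2)
      + (pellLucas (M+5) - 3*pellLucas (M+4))*t + (pellLucas (M+4) - 3*pellLucas (M+3))
      - (1+2*t-t^2)*(pellLucas (M+4) - 3*pellLucas (M+3)) + 4 = 0 := by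
    have h2 : (2:ℚ) - pellLucas (M+4) ≠ 0 := by rw [← hs_def]; exact hsne
    rw [hc5, ht_def, hr_def, hs_def]
    field_simp
    ring
  have hu_closed : u * (1+2*t-t^2) = 4*(t^(M+3) - 1) := by
    linear_combination (1+2*t-t^2) * hu2 + hA2 - 3*hA1 + SI0
  have hune : u ≠ 0 := by
    intro h; rw [h, zero_mul] at hu_closed
    apply hTne; linarith
  -- closed form for q 2
  have refl2 : ∑ i ∈ range (M+1), pellLucas (M+3-i) * t^i
      = ∑ j ∈ range (M+1), pellLucas (2+1+j) * t^(M+1-1-j) := by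
    conv_rhs => rw [← sum_range_reflect]
    exact sum_congr rfl fun j hj => by
      rw [mem_range] at hj
      rw [show 2+1+(M+1-1-j) = M+3-j from by omega, show M+1-1-(M+1-1-j) = j from by omega]
  have refl1 : ∑ i ∈ range (M+1), pellLucas (M+2-i) * t^i
      = ∑ j ∈ range (M+1), pellLucas (1+1+j) * t^(M+1-1-j) := by
    conv_rhs => rw [← sum_range_reflect]
    exact sum_congr rfl fun j hj => by
      rw [mem_range] at hj
      rw [show 1+1+(M+1-1-j) = M+2-j from by omega, show M+1-1-(M+1-1-j) = j from by omega]
  have sum_q2 : (∑ k ∈ Icc 1 (M+1), (pellLucas (M+3-k+1) - 3*pellLucas (M+3-k)) * r^(k-1) / s^k)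
      = (1/s) * ((∑ j ∈ range (M+1), pellLucas (2+1+j) * t^(M+1-1-j))
          - 3*(∑ j ∈ range (M+1), pellLucas (1+1+j) * t^(M+1-1-j))) := by
    rw [← Finset.Ico_add_one_right_eq_Icc, Finset.sum_Ico_eq_sum_range]
    simp only [show M+1+1-1 = M+1 from rfl]
    have h1 : ∀ i ∈ range (M+1),
        (pellLucas (M+3-(1+i)+1) - 3*pellLucas (M+3-(1+i))) * r^(1+i-1) / s^(1+i)
        = 1/s * (pellLucas (M+3-i) * t^i) - 3/s * (pellLucas (M+2-i) * t^i) := by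
      intro i hi; rw [mem_range] at hi
      rw [show M+3-(1+i)+1 = M+3-i from by omega, show M+3-(1+i) = M+2-i from by omega,
          show 1+i-1 = i from by omega, ht_def, div_pow,
          show (1:ℕ)+i = i+1 from by omega, pow_succ]
      have hsp : s^i ≠ 0 := pow_ne_zero _ hsne
      field_simp
    rw [sum_congr rfl h1, sum_sub_distrib, ← mul_sum, ← mul_sum, refl2, refl1]
    ring
  have hq2'' : s * (u * q 2) = -3*s +
      ((∑ j ∈ range (M+1), pellLucas (2+1+j) * t^(M+1-1-j))
        - 3*(∑ j ∈ range (M+1), pellLucas (1+1+j) * t^(M+1-1-j))) := by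
    rw [hq2, sum_q2]
    field_simp
  have SI2 : -3*s*(1+2*t-t^2) + (pellLucas (M+4) - 3*pellLucas (M+3))*t
      + pellLucas (M+3) - 3*pellLucas (M+2) - 8 + 4*t = 0 := by
    have h2 : (2:ℚ) - (2*pellLucas (M+3) + pellLucas (M+2)) ≠ 0 := by
      rw [← hc4, ← hs_def]; exact hsne
    rw [hc4, ht_def, hr_def, hs_def, hc4]
    field_simp
    ring
  have hq2_closed : q 2 = (t^(M+2) + 2 - t) / (s*(t^(M+3)-1)) := by
    rw [eq_div_iff hD]
    linear_combination (-(q 2 * s)/4)*hu_closed + ((1+2*t-t^2)/4)*hq2''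
      + (1/4)*hB2 - (3/4)*hB1 + (1/4)*SI2
  -- closed form for q 1
  have refl4 : ∑ i ∈ range M, pellLucas (M+4-i) * t^i
      = ∑ j ∈ range M, pellLucas (4+1+j) * t^(M-1-j) := by
    conv_rhs => rw [← sum_range_reflect]
    exact sum_congr rfl fun j hj => by
      rw [mem_range] at hj
      rw [show 4+1+(M-1-j) = M+4-j from by omega, show M-1-(M-1-j) = j from by omega]
  have refl3 : ∑ i ∈ range M, pellLucas (M+3-i) * t^i
      = ∑ j ∈ range M, pellLucas (3+1+j) * t^(M-1-j) := by
    conv_rhs => rw [← sum_range_reflect]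
    exact sum_congr rfl fun j hj => by
      rw [mem_range] at hj
      rw [show 3+1+(M-1-j) = M+3-j from by omega, show M-1-(M-1-j) = j from by omega]
  have sum_q1 : (∑ k ∈ Icc 1 M, (pellLucas (M+3-k+2) - 3*pellLucas (M+3-k+1)) * r^(k-1) / s^k)
      = (1/s) * ((∑ j ∈ range M, pellLucas (4+1+j) * t^(M-1-j))
          - 3*(∑ j ∈ range M, pellLucas (3+1+j) * t^(M-1-j))) := by
    rw [← Finset.Ico_add_one_right_eq_Icc, Finset.sum_Ico_eq_sum_range]
    simp only [show M+1-1 = M from rfl]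
    have h1 : ∀ i ∈ range M,
        (pellLucas (M+3-(1+i)+2) - 3*pellLucas (M+3-(1+i)+1)) * r^(1+i-1) / s^(1+i)
        = 1/s * (pellLucas (M+4-i) * t^i) - 3/s * (pellLucas (M+3-i) * t^i) := by
      intro i hi; rw [mem_range] at hi
      rw [show M+3-(1+i)+2 = M+4-i from by omega, show M+3-(1+i)+1 = M+3-i from by omega,
          show 1+i-1 = i from by omega, ht_def, div_pow,
          show (1:ℕ)+i = i+1 from by omega, pow_succ]
      have hsp : s^i ≠ 0 := pow_ne_zero _ hsne
      field_simp
    rw [sum_congr rfl h1, sum_sub_distrib, ← mul_sum, ← mul_sum, refl4, refl3]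
    ring
  have h8 : 8 * r^M / s^(M+1) = 8*t^M/s := by
    rw [ht_def, div_pow, pow_succ]
    have hsp : s^M ≠ 0 := pow_ne_zero _ hsne
    field_simp
  have hq1'' : s * (u * q 1) = s - 8*t^M +
      ((∑ j ∈ range M, pellLucas (4+1+j) * t^(M-1-j))
        - 3*(∑ j ∈ range M, pellLucas (3+1+j) * t^(M-1-j))) := by
    rw [hq1, sum_q1, h8]
    field_simp
  have SI1 : s*(1+2*t-t^2) + (pellLucas (M+5) - 3*pellLucas (M+4))*t
      + pellLucas (M+4) - 3*pellLucas (M+3) + 4 = 0 := by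
    have h2 : (2:ℚ) - pellLucas (M+4) ≠ 0 := by rw [← hs_def]; exact hsne
    rw [hc5, ht_def, hr_def, hs_def]
    field_simp
    ring
  have hq1_closed : q 1 = (t^(M+1) + 2*t^(M+2) - 1) / (s*(t^(M+3)-1)) := by
    rw [eq_div_iff hD]
    linear_combination (-(q 1 * s)/4)*hu_closed + ((1+2*t-t^2)/4)*hq1''
      + (1/4)*hC4 - (3/4)*hC3 + (1/4)*SI1
  -- Fin facts
  haveI : NeZero (M+3) := ⟨by omega⟩
  have hval1 : (1 : Fin (M+3)).val = 1 := Fin.val_one (M+1)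
  have hsub1 : ∀ b : Fin (M+3), b ≠ 0 → (b - 1).val = b.val - 1 := by
    intro b hb
    have hbv : 1 ≤ b.val := by
      rcases Nat.eq_zero_or_pos b.val with h | h
      · exact absurd (Fin.ext (by rw [h, Fin.val_zero]) : b = 0) hb
      · exact h
    have hlt := b.isLt
    rw [Fin.sub_def]
    simp only [hval1]
    show (M+3 - 1 + b.val) % (M+3) = b.val - 1
    rw [Nat.mod_eq_sub_mod (by omega), show M+3-1+b.val - (M+3) = b.val - 1 from by omega]
    exact Nat.mod_eq_of_lt (by omega)
  have hzm1 : ((0 : Fin (M+3)) - 1).val = M+2 := by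
    rw [Fin.sub_def]
    simp only [hval1, Fin.val_zero]
    show (M+3 - 1 + 0) % (M+3) = M+2
    rw [show M+3-1+0 = M+2 from by omega]
    exact Nat.mod_eq_of_lt (by omega)
  have hzm1ne : ((0 : Fin (M+3)) - 1) ≠ 0 := by
    intro h
    have := congrArg Fin.val h
    rw [hzm1, Fin.val_zero] at this
    omega
  have hzm2 : ((0 : Fin (M+3)) - 2).val = M+1 := by
    rw [show ((0 : Fin (M+3)) - 2) = 0 - 1 - 1 from by open Fin.CommRing in ring, hsub1 _ hzm1ne, hzm1]
    omega
  -- unified closed form over Fin indices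
  have hqP : ∀ b : Fin (M+3), q (b.val + 1)
      = (t^((b - 2 : Fin (M+3)).val) + 2*t^((b - 1 : Fin (M+3)).val) - t^(b.val))
        / (s*(t^(M+3)-1)) := by
    intro b
    by_cases hb0 : b.val = 0
    · have hb : b = 0 := Fin.ext (by rw [hb0, Fin.val_zero])
      rw [hb, Fin.val_zero, hzm1, hzm2, pow_zero]
      exact hq1_closed
    · by_cases hb1 : b.val = 1
      · have hb : b = 1 := Fin.ext (by rw [hb1, hval1])
        rw [hb, hval1, show ((1 : Fin (M+3)) - 2) = 0 - 1 from by open Fin.CommRing in ring,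
            show ((1 : Fin (M+3)) - 1) = 0 from by open Fin.CommRing in ring, hzm1, Fin.val_zero,
            pow_zero, pow_one, mul_one]
        exact hq2_closed
      · have hb2' : 2 ≤ b.val := by omega
        have hbne : b ≠ 0 := by
          intro h; rw [h, Fin.val_zero] at hb0; exact hb0 rfl
        have v1 : (b - 1).val = b.val - 1 := hsub1 b hbne
        have hbne1 : b - 1 ≠ 0 := by
          intro h
          have := congrArg Fin.val h
          rw [v1, Fin.val_zero] at this
          omega
        have v2 : (b - 2).val = b.val - 2 := by
          rw [show (b - 2 : Fin (M+3)) = b - 1 - 1 from by open Fin.CommRing in ring, hsub1 _ hbne1, v1]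
          omega
        obtain ⟨e, he⟩ : ∃ e, b.val = e + 2 := ⟨b.val - 2, by omega⟩
        have hele : e + 3 ≤ M + 3 := by have := b.isLt; omega
        have hqm' := hqm (e+3) (by omega) hele
        rw [show e+3-3 = e from by omega, show e+3-2 = e+1 from by omega] at hqm'
        rw [v1, v2, he, show e+2+1 = e+3 from rfl, show e+2-1 = e+1 from rfl,
            show e+2-2 = e from rfl, hqm']
        have hre : r^e = s^e * t^e := by rw [← hst, mul_pow]
        have husne : u * s^(e+1) ≠ 0 := mul_ne_zero hune (pow_ne_zero _ hsne)
        rw [div_eq_div_iff husne hD]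
        linear_combination (4*(s*(t^(M+3)-1)))*hre - (s^(e+1)*t^e)*hu_closed
  -- the convolution identity
  have conv : ∀ d : Fin (M+3),
      (∑ a : Fin (M+3), pellLucas (a.val+1) * q ((d - a).val+1)) = if d = 0 then 1 else 0 := by
    intro d
    have step1 : (∑ a : Fin (M+3), pellLucas (a.val+1) * q ((d - a).val+1))
        = (∑ a : Fin (M+3), pellLucas (a.val+1) *
            (t^((d - a - 2 : Fin (M+3)).val) + 2*t^((d - a - 1 : Fin (M+3)).val)
              - t^((d - a : Fin (M+3)).val)))
          / (s*(t^(M+3)-1)) := by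
      rw [sum_div]
      exact Fintype.sum_congr _ _ fun a => by rw [hqP (d - a)]; ring
    rw [step1]
    have e1 : (∑ a : Fin (M+3), pellLucas (a.val+1) * t^((d - a - 2 : Fin (M+3)).val))
        = ∑ b : Fin (M+3), pellLucas ((d - 2 - b : Fin (M+3)).val+1) * t^(b.val) := by
      apply Fintype.sum_equiv (Equiv.subLeft (d - 2))
      intro a
      simp only [Equiv.subLeft_apply]
      rw [sub_sub_cancel, sub_right_comm]
    have e2 : (∑ a : Fin (M+3), pellLucas (a.val+1) * t^((d - a - 1 : Fin (M+3)).val))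
        = ∑ b : Fin (M+3), pellLucas ((d - 1 - b : Fin (M+3)).val+1) * t^(b.val) := by
      apply Fintype.sum_equiv (Equiv.subLeft (d - 1))
      intro a
      simp only [Equiv.subLeft_apply]
      rw [sub_sub_cancel, sub_right_comm]
    have e3 : (∑ a : Fin (M+3), pellLucas (a.val+1) * t^((d - a : Fin (M+3)).val))
        = ∑ b : Fin (M+3), pellLucas ((d - b : Fin (M+3)).val+1) * t^(b.val) := by
      apply Fintype.sum_equiv (Equiv.subLeft d)
      intro a
      simp only [Equiv.subLeft_apply]
      rw [sub_sub_cancel]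
    have split3 : (∑ a : Fin (M+3), pellLucas (a.val+1) *
            (t^((d - a - 2 : Fin (M+3)).val) + 2*t^((d - a - 1 : Fin (M+3)).val)
              - t^((d - a : Fin (M+3)).val)))
        = ∑ b : Fin (M+3), (pellLucas ((d - 2 - b : Fin (M+3)).val+1)
            + 2*pellLucas ((d - 1 - b : Fin (M+3)).val+1)
            - pellLucas ((d - b : Fin (M+3)).val+1)) * t^(b.val) := by
      have lhs_split : (∑ a : Fin (M+3), pellLucas (a.val+1) *
            (t^((d - a - 2 : Fin (M+3)).val) + 2*t^((d - a - 1 : Fin (M+3)).val)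
              - t^((d - a : Fin (M+3)).val)))
          = (∑ a : Fin (M+3), pellLucas (a.val+1) * t^((d - a - 2 : Fin (M+3)).val))
            + 2*(∑ a : Fin (M+3), pellLucas (a.val+1) * t^((d - a - 1 : Fin (M+3)).val))
            - (∑ a : Fin (M+3), pellLucas (a.val+1) * t^((d - a : Fin (M+3)).val)) := by
        rw [mul_sum, ← sum_add_distrib, ← sum_sub_distrib]
        exact Fintype.sum_congr _ _ fun a => by ring
      rw [lhs_split, e1, e2, e3, mul_sum, ← sum_add_distrib, ← sum_sub_distrib]
      exact Fintype.sum_congr _ _ fun b => by ring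
    rw [split3]
    have hvanish : ∀ b ∈ (univ : Finset (Fin (M+3))),
        b ∉ ({d, d - 1} : Finset (Fin (M+3))) →
        (pellLucas ((d - 2 - b : Fin (M+3)).val+1)
            + 2*pellLucas ((d - 1 - b : Fin (M+3)).val+1)
            - pellLucas ((d - b : Fin (M+3)).val+1)) * t^(b.val) = 0 := by
      intro b _ hb
      simp only [mem_insert, mem_singleton] at hb
      push_neg at hb
      obtain ⟨hb1, hb2⟩ := hb
      have h0 : d - b ≠ 0 := sub_ne_zero.mpr (Ne.symm hb1)
      have h1 : d - b ≠ 1 := by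
        intro h
        apply hb2
        have := congrArg (fun x => d - x) h
        simp only [sub_sub_cancel] at this
        rw [this]
      have hk : 2 ≤ (d - b).val := by
        rcases Nat.lt_or_ge (d - b).val 2 with h | h
        · have h' : (d - b).val = 0 ∨ (d - b).val = 1 := by omega
          rcases h' with h' | h'
          · exact absurd (Fin.ext (by rw [h', Fin.val_zero]) : d - b = 0) h0
          · exact absurd (Fin.ext (by rw [h', hval1]) : d - b = 1) h1
        · exact h
      obtain ⟨e, he⟩ : ∃ e, (d - b).val = e + 2 := ⟨(d - b).val - 2, by omega⟩
      have v1 : (d - b - 1).val = e + 1 := by rw [hsub1 _ h0, he]; omega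
      have hne1 : d - b - 1 ≠ 0 := by
        intro h
        have := congrArg Fin.val h
        rw [v1, Fin.val_zero] at this
        omega
      have v2 : (d - b - 2).val = e := by
        rw [show (d - b - 2 : Fin (M+3)) = d - b - 1 - 1 from by open Fin.CommRing in ring, hsub1 _ hne1, v1]
        omega
      rw [show (d - 2 - b : Fin (M+3)) = d - b - 2 from by open Fin.CommRing in ring,
          show (d - 1 - b : Fin (M+3)) = d - b - 1 from by open Fin.CommRing in ring, v2, v1, he]
      have hrec := pl_rec (e+1)
      simp only [show e+1+1 = e+2 from rfl, show e+2+1 = e+3 from rfl,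
        show e+1+2 = e+3 from rfl] at hrec ⊢
      linear_combination (-(t^(b.val))) * hrec
    rw [← sum_subset (subset_univ ({d, d - 1} : Finset (Fin (M+3)))) hvanish]
    have hdd : d ≠ d - 1 := by
      intro h
      have h1 : (1 : Fin (M+3)) = 0 := by
        have h2 : d - (d - 1) = d - d := by rw [← h]
        rw [sub_self, sub_sub_cancel] at h2
        exact h2
      have := congrArg Fin.val h1
      rw [hval1, Fin.val_zero] at this
      omega
    rw [sum_pair hdd]
    rw [show (d - 2 - d : Fin (M+3)) = 0 - 2 from by open Fin.CommRing in ring,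
        show (d - 1 - d : Fin (M+3)) = 0 - 1 from by open Fin.CommRing in ring,
        show (d - d : Fin (M+3)) = 0 from by open Fin.CommRing in ring,
        show (d - 2 - (d - 1) : Fin (M+3)) = 0 - 1 from by open Fin.CommRing in ring,
        show (d - 1 - (d - 1) : Fin (M+3)) = 0 from by open Fin.CommRing in ring,
        show (d - (d - 1) : Fin (M+3)) = 1 from by open Fin.CommRing in ring,
        hzm1, hzm2, Fin.val_zero, hval1]
    simp only [show M+1+1 = M+2 from rfl, show M+2+1 = M+3 from rfl,
      show (0:ℕ)+1 = 1 from rfl, show (1:ℕ)+1 = 2 from rfl, pl1, pl2]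
    by_cases hd : d = 0
    · rw [if_pos hd, hd, Fin.val_zero, hzm1, pow_zero]
      rw [div_eq_one_iff_eq hD]
      linear_combination hs_def - hc4 - t^(M+2)*hr_def - t^(M+2)*hst
    · rw [if_neg hd]
      rw [div_eq_zero_iff]
      left
      rw [hsub1 d hd]
      have hdv : d.val ≠ 0 := fun hh => hd (Fin.ext (by rw [hh, Fin.val_zero]))
      obtain ⟨e, he⟩ : ∃ e, d.val = e + 1 := ⟨d.val - 1, by omega⟩
      rw [he, show e+1-1 = e from rfl]
      linear_combination (-(t^e))*hst + t^(e+1)*hs_def - t^(e+1)*hc4 - t^e*hr_def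
  -- the matrix computation
  apply Matrix.inv_eq_right_inv
  ext i j
  rw [Matrix.mul_apply, Matrix.one_apply]
  simp only [circMat]
  have reidx : ∑ k : Fin (M+3), pellLucas ((k - i).val + 1) * q ((j - k).val + 1)
      = ∑ a : Fin (M+3), pellLucas (a.val + 1) * q (((j - i) - a).val + 1) := by
    refine (Fintype.sum_equiv (Equiv.addLeft i) _ _ ?_).symm
    intro a
    simp only [Equiv.coe_addLeft]
    rw [add_sub_cancel_left, sub_add_eq_sub_sub]
  rw [reidx, conv (j - i)]
  by_cases h : i = j
  · simp [h, sub_self]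
  · have hne : j - i ≠ 0 := sub_ne_zero.mpr (Ne.symm h)
    simp [h, hne]
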